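/- Prefix-optimality recurrence for the IO-Optimal dynamic program: for every block i : Fin λ and every s : ℝ≥0 with c i < s, C s i = ⨅_{j : Fin λ, j < i} (C (s − c i) j + RandIO j i), where s − c i denotes truncated subtraction in ℝ≥0 and the infimum over an empty family is ⊤. -/

import Mathlib

open scoped ENNReal

/-- I/O cost of fetching a finite set of blocks in increasing order:
`κ` plus the sum of `RandIO` costs between consecutive fetched blocks. -/
noncomputable def ioCost {lam : ℕ} (κ : NNReal) (RandIO : Fin lam → Fin lam → NNReal)
    (Ω : Finset (Fin lam)) : NNReal :=
  κ + (((Ω.sort (· ≤ ·)).zip (Ω.sort (· ≤ ·)).tail).map (fun p => RandIO p.1 p.2)).sum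

/-- `ioC s i`: infimum of `ioCost Ω` over finite block sets `Ω` with `i ∈ Ω`,
every element of `Ω` at most `i`, and total count at least `s` (`⊤` if none exists). -/
noncomputable def ioC {lam : ℕ} (κ : NNReal) (RandIO : Fin lam → Fin lam → NNReal)
    (c : Fin lam → NNReal) (s : NNReal) (i : Fin lam) : ℝ≥0∞ :=
  ⨅ (Ω : Finset (Fin lam)) (_ : i ∈ Ω) (_ : ∀ b ∈ Ω, b ≤ i)
    (_ : s ≤ ∑ b ∈ Ω, c b), (ioCost κ RandIO Ω : ℝ≥0∞)

/-- `ioOpt s i`: infimum of `ioCost Ω` over nonempty finite block sets `Ω` with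
every element at most `i` and total count at least `s`. -/
noncomputable def ioOpt {lam : ℕ} (κ : NNReal) (RandIO : Fin lam → Fin lam → NNReal)
    (c : Fin lam → NNReal) (s : NNReal) (i : Fin lam) : ℝ≥0∞ :=
  ⨅ (Ω : Finset (Fin lam)) (_ : Ω.Nonempty) (_ : ∀ b ∈ Ω, b ≤ i)
    (_ : s ≤ ∑ b ∈ Ω, c b), (ioCost κ RandIO Ω : ℝ≥0∞)

lemma zipsum_append {α β : Type*} [AddCommMonoid β] (f : α × α → β) :
    ∀ (l : List α) (hl : l ≠ []) (a : α),
      (((l ++ [a]).zip (l ++ [a]).tail).map f).sum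
        = ((l.zip l.tail).map f).sum + f (l.getLast hl, a)
  | [], hl, a => absurd rfl hl
  | [x], _, a => by simp
  | x :: y :: t, _, a => by
    have ih := zipsum_append f (y :: t) (by simp) a
    simp only [List.cons_append, List.zip_cons_cons, List.tail_cons, List.map_cons,
      List.sum_cons] at *
    rw [ih, show (x :: y :: t).getLast (by simp) = (y :: t).getLast (by simp) from
      List.getLast_cons (by simp), add_assoc]

lemma sort_insert_max {n : ℕ} (i : Fin n) (Ω : Finset (Fin n)) (h : ∀ b ∈ Ω, b < i) :
    (insert i Ω).sort (· ≤ ·) = Ω.sort (· ≤ ·) ++ [i] := by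
  refine (fun hp h1 h2 => List.Perm.eq_of_pairwise' (r := (· ≤ · : Fin n → Fin n → Prop)) h1 h2 hp) ?_ ?_ ?_
  · refine (Finset.sort_perm_toList _ _).trans ?_
    refine List.Perm.trans ?_ (List.Perm.append (Finset.sort_perm_toList _ _).symm (List.Perm.refl _))
    refine List.Perm.trans ?_ (List.perm_append_comm)
    simpa using (Finset.toList_insert (fun hi => absurd (h i hi) (lt_irrefl i)))
  · exact Finset.pairwise_sort _ _
  · rw [List.pairwise_append]
    refine ⟨Finset.pairwise_sort _ _, by simp, ?_⟩
    intro a ha b hb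
    simp at hb; subst hb
    exact (h a (by simpa using ha)).le

lemma ioCost_insert {n : ℕ} (κ : NNReal) (R : Fin n → Fin n → NNReal) (i : Fin n)
    (Ω : Finset (Fin n)) (hne : Ω.Nonempty) (h : ∀ b ∈ Ω, b < i) :
    ioCost κ R (insert i Ω) = ioCost κ R Ω + R (Ω.max' hne) i := by
  have hl : Ω.sort (· ≤ ·) ≠ [] := fun hemp => hne.ne_empty
    (Finset.card_eq_zero.mp (by simpa using congrArg List.length hemp))
  have hlast : (Ω.sort (· ≤ ·)).getLast hl = Ω.max' hne := by
    rw [List.getLast_eq_getElem]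
    exact Finset.sorted_last_eq_max'
  rw [ioCost, ioCost, sort_insert_max i Ω h, zipsum_append _ _ hl i, hlast, add_assoc]

/-- Prefix-optimality recurrence for the IO-Optimal dynamic program. -/
theorem ioC_recurrence {lam : ℕ} (κ : NNReal) (RandIO : Fin lam → Fin lam → NNReal)
    (c : Fin lam → NNReal) (i : Fin lam) (s : NNReal) (hs : c i < s) :
    ioC κ RandIO c s i =
      ⨅ (j : Fin lam) (_ : j < i),
        (ioC κ RandIO c (s - c i) j + (RandIO j i : ℝ≥0∞)) := by
  apply le_antisymm
  · refine le_iInf fun j => le_iInf fun hj => ?_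
    conv_rhs => rw [ioC]
    simp only [ENNReal.iInf_add]
    refine le_iInf fun Ω' => le_iInf fun h1 => le_iInf fun h2 => le_iInf fun h3 => ?_
    rw [ioC]
    have hne : Ω'.Nonempty := ⟨j, h1⟩
    have hmax : Ω'.max' hne = j := le_antisymm (Finset.max'_le _ _ _ h2) (Finset.le_max' _ _ h1)
    have hlt : ∀ b ∈ Ω', b < i := fun b hb => lt_of_le_of_lt (h2 b hb) hj
    have hni : i ∉ Ω' := fun hi => absurd (hlt i hi) (lt_irrefl i)
    have hcost : ioCost κ RandIO (insert i Ω') = ioCost κ RandIO Ω' + RandIO j i := by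
      rw [ioCost_insert κ RandIO i Ω' hne hlt, hmax]
    refine iInf_le_of_le (insert i Ω') (iInf_le_of_le (Finset.mem_insert_self _ _)
      (iInf_le_of_le ?_ (iInf_le_of_le ?_ ?_)))
    · intro b hb
      rcases Finset.mem_insert.mp hb with rfl | hb
      · exact le_refl b
      · exact (hlt b hb).le
    · rw [Finset.sum_insert hni]
      calc s = c i + (s - c i) := (add_tsub_cancel_of_le hs.le).symm
        _ ≤ c i + ∑ b ∈ Ω', c b := add_le_add_right h3 _
    · rw [hcost]; push_cast; rfl
  · rw [ioC]
    refine le_iInf fun Ω => le_iInf fun hi => le_iInf fun hle => le_iInf fun hsum => ?_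
    have hne : (Ω.erase i).Nonempty := by
      rcases Finset.eq_empty_or_nonempty (Ω.erase i) with h | h
      · exfalso
        have : Ω = {i} := by
          apply Finset.eq_singleton_iff_unique_mem.mpr
          refine ⟨hi, fun b hb => ?_⟩
          by_contra hbi
          exact (Finset.eq_empty_iff_forall_notMem.mp h) b (Finset.mem_erase.mpr ⟨hbi, hb⟩)
        rw [this, Finset.sum_singleton] at hsum
        exact absurd hsum (not_le.mpr hs)
      · exact h
    set j := (Ω.erase i).max' hne with hj
    have hjmem : j ∈ Ω.erase i := Finset.max'_mem _ _
    have hji : j < i := lt_of_le_of_ne (hle j (Finset.mem_of_mem_erase hjmem))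
      (Finset.mem_erase.mp hjmem).1
    have hlt : ∀ b ∈ Ω.erase i, b < i := fun b hb =>
      lt_of_le_of_ne (hle b (Finset.mem_of_mem_erase hb)) (Finset.mem_erase.mp hb).1
    have hsum' : s - c i ≤ ∑ b ∈ Ω.erase i, c b := by
      rw [tsub_le_iff_left]
      rwa [Finset.add_sum_erase _ _ hi]
    have hcost : ioCost κ RandIO Ω = ioCost κ RandIO (Ω.erase i) + RandIO j i := by
      conv_lhs => rw [← Finset.insert_erase hi]
      exact ioCost_insert κ RandIO i _ hne hlt
    refine iInf_le_of_le j (iInf_le_of_le hji ?_)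
    have hC : ioC κ RandIO c (s - c i) j ≤ (ioCost κ RandIO (Ω.erase i) : ℝ≥0∞) := by
      rw [ioC]
      refine iInf_le_of_le (Ω.erase i) (iInf_le_of_le hjmem (iInf_le_of_le
        (fun b hb => Finset.le_max' _ _ hb) (iInf_le_of_le hsum' le_rfl)))
    calc ioC κ RandIO c (s - c i) j + (RandIO j i : ℝ≥0∞)
        ≤ (ioCost κ RandIO (Ω.erase i) : ℝ≥0∞) + (RandIO j i : ℝ≥0∞) := add_le_add_left hC _
      _ = (ioCost κ RandIO Ω : ℝ≥0∞) := by rw [hcost]; push_cast; rfl
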